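/- For every x ≥ 0, 𝔼 (N(x) − M(x))² = ∫₀^x F(x−y)(1 − F(x−y)) dU(y), where U(x) = 𝔼 ρ(x) is the renewal function. -/

import Mathlib

open MeasureTheory ProbabilityTheory Filter Real Set Topology
open scoped ENNReal NNReal

/-- A finite downward-closed set of naturals is an initial segment. -/
lemma nat_downclosed_eq_Iio (t : Set ℕ) (ht : t.Finite)
    (hdc : ∀ j k : ℕ, j ≤ k → k ∈ t → j ∈ t) : t = Set.Iio t.ncard := by
  have hne : {m : ℕ | m ∉ t}.Nonempty := by
    rcases Set.Infinite.nonempty (Set.Finite.infinite_compl ht) with ⟨m, hm⟩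
    exact ⟨m, hm⟩
  set n := sInf {m : ℕ | m ∉ t} with hn
  have hnmem : n ∉ t := csInf_mem hne
  have hteq : t = Set.Iio n := by
    ext k
    constructor
    · intro hk
      by_contra hlt
      simp only [Set.mem_Iio, not_lt] at hlt
      exact hnmem (hdc n k (by simpa using hlt) hk)
    · intro hk
      by_contra hkt
      have := Nat.sInf_le (show k ∈ {m : ℕ | m ∉ t} from hkt)
      rw [← hn] at this
      exact absurd hk (by simpa using this)
  rw [hteq]
  rw [Set.ncard_eq_toFinset_card', Set.toFinset_Iio]
  simp


set_option maxHeartbeats 2000000 in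
/-- **Lemma 4 (Lemma `shot`), exact formula.** For every `x ≥ 0`,
`𝔼(N(x) − M(x))² = ∫₀^x F(x−y)(1 − F(x−y)) dU(y)`, where `F` is the distribution function
of `η`, `M` is the renewal shot-noise process and `U(x) = 𝔼ρ(x)` is the renewal function
(whose Lebesgue–Stieltjes measure is `Σ_k law(S_k)`). -/
theorem perturbed_rw_shot_noise_variance
    {Ω : Type*} [MeasurableSpace Ω] (Pr : Measure Ω) [IsProbabilityMeasure Pr]
    (ξ η : ℕ → Ω → ℝ)
    (hmeas : ∀ k, Measurable (fun ω => (ξ k ω, η k ω)))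
    -- ξ > 0 and η ≥ 0
    (hpos : ∀ k, ∀ᵐ ω ∂Pr, 0 < ξ k ω) (hnonneg : ∀ k, ∀ᵐ ω ∂Pr, 0 ≤ η k ω)
    -- (ξ_k, η_k)_{k≥1} are i.i.d. copies of the vector (ξ, η)
    (hid : ∀ k, Measure.map (fun ω => (ξ k ω, η k ω)) Pr
      = Measure.map (fun ω => (ξ 0 ω, η 0 ω)) Pr)
    (hindep : iIndepFun (fun k ω => (ξ k ω, η k ω)) Pr)
    -- the distribution of ξ is non-lattice
    (hnonlattice : ¬ ∃ d > (0 : ℝ), ∀ᵐ ω ∂Pr, ∃ n : ℕ, ξ 0 ω = n * d)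
    -- the random walk S and the number of renewals ρ(x) = #{k ≥ 0 : S_k ≤ x}
    (S : ℕ → Ω → ℝ) (hS : ∀ k ω, S k ω = ∑ i ∈ Finset.range k, ξ i ω)
    (ρ : ℝ → Ω → ℕ) (hρ : ∀ x ω, ρ x ω = Set.ncard {k : ℕ | S k ω ≤ x})
    -- the perturbed-walk counting process N
    (N : ℝ → Ω → ℕ) (hN : ∀ x ω, N x ω = Set.ncard {k : ℕ | S k ω + η k ω ≤ x})
    -- F, the distribution function of η
    (F : ℝ → ℝ) (hF : ∀ t, F t = (Pr {ω | η 0 ω ≤ t}).toReal)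
    -- the renewal shot-noise process M
    (M : ℝ → Ω → ℝ) (hM : ∀ x ω, M x ω = ∑ k ∈ Finset.range (ρ x ω), F (x - S k ω)) :
    ∀ x : ℝ, 0 ≤ x →
      (∫ ω, ((N x ω : ℝ) - M x ω) ^ 2 ∂Pr) =
        ∫ y in Set.Icc (0 : ℝ) x, F (x - y) * (1 - F (x - y))
          ∂(Measure.sum fun k : ℕ => Measure.map (S k) Pr) := by
  intro x hx
  -- basic measurability
  have mξ : ∀ k, Measurable (ξ k) := fun k => (measurable_fst.comp (hmeas k))
  have mη : ∀ k, Measurable (η k) := fun k => (measurable_snd.comp (hmeas k))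
  have mS : ∀ k, Measurable (S k) := by
    intro k
    have : S k = fun ω => ∑ i ∈ Finset.range k, ξ i ω := funext fun ω => hS k ω
    rw [this]; exact Finset.measurable_sum _ fun i _ => mξ i
  have mF : Measurable F := by
    have : Monotone F := by
      intro a b hab
      rw [hF a, hF b]
      exact ENNReal.toReal_mono (measure_ne_top _ _)
        (measure_mono fun ω (h : η 0 ω ≤ a) => le_trans h hab)
    exact this.measurable
  have F0 : ∀ t, 0 ≤ F t := fun t => by rw [hF t]; positivity
  have F1 : ∀ t, F t ≤ 1 := by
    intro t; rw [hF t]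
    exact ENNReal.toReal_le_of_le_ofReal one_pos.le (by simpa using prob_le_one)
  have Fneg : ∀ t, t < 0 → F t = 0 := by
    intro t ht
    rw [hF t]
    have : Pr {ω | η 0 ω ≤ t} = 0 := by
      refine measure_mono_null (fun ω (h : η 0 ω ≤ t) => ?_) (by
        have := hnonneg 0
        rwa [ae_iff] at this)
      exact not_le.2 (lt_of_le_of_lt h ht)
    simp [this]
  -- laws of η k all equal ν
  have hν : ∀ k, Measure.map (η k) Pr = Measure.map (η 0) Pr := by
    intro k
    have h1 : Measure.map (η k) Pr
        = Measure.map Prod.snd (Measure.map (fun ω => (ξ k ω, η k ω)) Pr) := by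
      rw [Measure.map_map measurable_snd (hmeas k)]; rfl
    rw [h1, hid k, Measure.map_map measurable_snd (hmeas 0)]; rfl
  -- integrability of bounded measurable functions
  have intbdd : ∀ (f : Ω → ℝ), Measurable f → ∀ C : ℝ, (∀ᵐ ω ∂Pr, ‖f ω‖ ≤ C) →
      Integrable f Pr := by
    intro f hf C hC
    exact Integrable.mono' (integrable_const C) hf.aestronglyMeasurable hC
  have Snonneg : ∀ k, ∀ᵐ ω ∂Pr, 0 ≤ S k ω := by
    intro k
    have := ae_all_iff.2 hpos
    filter_upwards [this] with ω hω
    rw [hS k ω]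
    exact Finset.sum_nonneg fun i _ => (hω i).le
  have intexpS : ∀ k, Integrable (fun ω => Real.exp (-S k ω)) Pr := by
    intro k
    refine intbdd _ ((mS k).neg.exp) 1 ?_
    filter_upwards [Snonneg k] with ω hω
    rw [Real.norm_eq_abs, abs_of_pos (Real.exp_pos _)]
    exact Real.exp_le_one_iff.2 (neg_nonpos.2 hω)
  set c : ℝ := ∫ ω, Real.exp (-ξ 0 ω) ∂Pr with hc
  have intexpξ : ∀ k, Integrable (fun ω => Real.exp (-ξ k ω)) Pr := by
    intro k
    refine intbdd _ ((mξ k).neg.exp) 1 ?_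
    filter_upwards [hpos k] with ω hω
    rw [Real.norm_eq_abs, abs_of_pos (Real.exp_pos _)]
    exact Real.exp_le_one_iff.2 (neg_nonpos.2 hω.le)
  have hexpξ : ∀ k, ∫ ω, Real.exp (-ξ k ω) ∂Pr = c := by
    intro k
    rw [hc]
    have h1 : ∀ m : ℕ, ∫ ω, Real.exp (-ξ m ω) ∂Pr
        = ∫ p : ℝ × ℝ, Real.exp (-p.1) ∂(Measure.map (fun ω => (ξ m ω, η m ω)) Pr) := by
      intro m
      exact (integral_map (hmeas m).aemeasurable
        (measurable_fst.neg.exp.aestronglyMeasurable)).symm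
    rw [h1 0, h1 k, hid k]
  have hc0 : 0 ≤ c := integral_nonneg fun ω => (Real.exp_pos _).le
  have hc1 : c < 1 := by
    -- find t > 0 with Pr {ξ 0 > t} > 0
    obtain ⟨n, hn⟩ : ∃ n : ℕ, 0 < Pr {ω | 1 / (n + 1) < ξ 0 ω} := by
      by_contra hcon
      push_neg at hcon
      simp only [le_zero_iff] at hcon
      have hU : Pr (⋃ n : ℕ, {ω | 1 / ((n : ℝ) + 1) < ξ 0 ω}) = 0 :=
        measure_iUnion_null hcon
      have hsub : {ω | 0 < ξ 0 ω} ⊆ ⋃ n : ℕ, {ω | 1 / ((n : ℝ) + 1) < ξ 0 ω} := by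
        intro ω hω
        have hω' : (0:ℝ) < ξ 0 ω := hω
        obtain ⟨n, hn⟩ := exists_nat_one_div_lt hω'
        exact Set.mem_iUnion.2 ⟨n, hn⟩
      have h1 : Pr {ω | 0 < ξ 0 ω} = 0 := measure_mono_null hsub hU
      have h2 : Pr {ω | 0 < ξ 0 ω}ᶜ = 0 := by
        have h3 := hpos 0
        rw [ae_iff] at h3
        rw [Set.compl_setOf]
        simpa using h3
      have := measure_add_measure_compl (μ := Pr)
        (s := {ω | 0 < ξ 0 ω}) (measurableSet_lt measurable_const (mξ 0))
      rw [h1, h2] at this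
      simp at this
    set t : ℝ := 1 / ((n : ℝ) + 1) with ht
    have htpos : 0 < t := by positivity
    set E : Set Ω := {ω | t < ξ 0 ω} with hE
    have hEmeas : MeasurableSet E := measurableSet_lt measurable_const (mξ 0)
    have key : c ≤ 1 - (1 - Real.exp (-t)) * (Pr E).toReal := by
      have hle : ∀ᵐ ω ∂Pr, Real.exp (-ξ 0 ω)
          ≤ 1 - (1 - Real.exp (-t)) * E.indicator (fun _ => (1:ℝ)) ω := by
        filter_upwards [hpos 0] with ω hω
        by_cases hmem : ω ∈ E
        · rw [Set.indicator_of_mem hmem]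
          have : Real.exp (-ξ 0 ω) ≤ Real.exp (-t) :=
            Real.exp_le_exp.2 (by simpa using hmem.le)
          linarith
        · rw [Set.indicator_of_notMem hmem]
          have : Real.exp (-ξ 0 ω) ≤ 1 := Real.exp_le_one_iff.2 (by linarith)
          linarith
      have hint : Integrable (fun ω => 1 - (1 - Real.exp (-t))
          * E.indicator (fun _ => (1:ℝ)) ω) Pr := by
        refine (integrable_const (1:ℝ)).sub (Integrable.const_mul ?_ _)
        exact (integrable_const (1:ℝ)).indicator hEmeas
      calc c ≤ ∫ ω, (1 - (1 - Real.exp (-t)) * E.indicator (fun _ => (1:ℝ)) ω) ∂Pr :=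
            integral_mono_ae (intexpξ 0) hint hle
        _ = 1 - (1 - Real.exp (-t)) * (Pr E).toReal := by
            rw [integral_sub (integrable_const _) (Integrable.const_mul
              ((integrable_const (1:ℝ)).indicator hEmeas) _)]
            rw [integral_const, integral_const_mul, integral_indicator_const _ hEmeas]
            simp [Measure.real]
    have hPE : 0 < (Pr E).toReal := by
      refine ENNReal.toReal_pos (by simpa [hE, ht] using hn.ne') (measure_ne_top _ _)
    have h3 : 0 < (1 - Real.exp (-t)) * (Pr E).toReal := by
      have : Real.exp (-t) < 1 := Real.exp_lt_one_iff.2 (by linarith)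
      exact mul_pos (by linarith) hPE
    linarith
  -- product formula
  have hexpS : ∀ k, ∫ ω, Real.exp (-S k ω) ∂Pr = c ^ k := by
    intro k
    induction k with
    | zero => simp [hS 0, funext fun ω => hS 0 ω]
    | succ k ih =>
        have hsplit : (fun ω => Real.exp (-S (k+1) ω))
            = fun ω => Real.exp (-S k ω) * Real.exp (-ξ k ω) := by
          funext ω
          rw [← Real.exp_add, hS (k+1) ω, hS k ω, Finset.sum_range_succ]
          ring_nf
        -- independence of exp(-S k) and exp(-ξ k)
        have hind : IndepFun (fun ω => Real.exp (-S k ω)) (fun ω => Real.exp (-ξ k ω)) Pr := by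
          have hgrp := hindep.indepFun_finset (Finset.range k) {k}
            (by simp [Finset.disjoint_left]; omega) hmeas
          have hφ : Measurable (fun v : ({i // i ∈ Finset.range k} → ℝ × ℝ) =>
              Real.exp (-(∑ i : {i // i ∈ Finset.range k}, (v i).1))) := by
            exact ((Finset.measurable_sum Finset.univ fun i _ =>
              (measurable_pi_apply i).fst).neg).exp
          have hψ : Measurable (fun v : ({i // i ∈ ({k} : Finset ℕ)} → ℝ × ℝ) =>
              Real.exp (-(v ⟨k, by simp⟩).1)) := ((measurable_pi_apply _).fst.neg).exp
          have hcomp := hgrp.comp hφ hψ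
          have e1 : ((fun v : ({i // i ∈ Finset.range k} → ℝ × ℝ) =>
                Real.exp (-(∑ i : {i // i ∈ Finset.range k}, (v i).1)))
                ∘ (fun a (i : {i // i ∈ Finset.range k}) => (ξ (i:ℕ) a, η (i:ℕ) a)))
              = (fun ω => Real.exp (-S k ω)) := by
            funext ω
            simp only [Function.comp_apply]
            congr 1
            rw [hS k ω, ← Finset.sum_coe_sort (Finset.range k) (fun i => ξ i ω)]
          have e2 : ((fun v : ({i // i ∈ ({k} : Finset ℕ)} → ℝ × ℝ) =>
                Real.exp (-(v ⟨k, by simp⟩).1))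
                ∘ (fun a (i : {i // i ∈ ({k} : Finset ℕ)}) => (ξ (i:ℕ) a, η (i:ℕ) a)))
              = (fun ω => Real.exp (-ξ k ω)) := rfl
          rw [e1, e2] at hcomp
          exact hcomp
        rw [hsplit, pow_succ, ← ih, ← hexpξ k]
        exact hind.integral_mul_eq_mul_integral (intexpS k).aestronglyMeasurable (intexpξ k).aestronglyMeasurable
  -- Chernoff bound
  have chern : ∀ k, Pr {ω | S k ω ≤ x} ≤ ENNReal.ofReal (Real.exp x * c ^ k) := by
    intro k
    have hset : {ω | S k ω ≤ x} = {ω | Real.exp (-x) ≤ Real.exp (-S k ω)} := by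
      ext ω; simp [Real.exp_le_exp]
    have hm := mul_meas_ge_le_integral_of_nonneg
      (f := fun ω => Real.exp (-S k ω)) (μ := Pr)
      (ae_of_all _ fun ω => (Real.exp_pos _).le) (intexpS k) (Real.exp (-x))
    rw [hexpS k] at hm
    rw [hset]
    have h2 : (Pr {ω | Real.exp (-x) ≤ Real.exp (-S k ω)}).toReal
        ≤ Real.exp x * c ^ k := by
      have hexppos : 0 < Real.exp (-x) := Real.exp_pos _
      rw [← le_div_iff₀' hexppos] at hm
      calc (Pr {ω | Real.exp (-x) ≤ Real.exp (-S k ω)}).toReal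
          ≤ c ^ k / Real.exp (-x) := hm
        _ = Real.exp x * c ^ k := by rw [Real.exp_neg]; field_simp
    calc Pr {ω | Real.exp (-x) ≤ Real.exp (-S k ω)}
        = ENNReal.ofReal ((Pr {ω | Real.exp (-x) ≤ Real.exp (-S k ω)}).toReal) := by
          rw [ENNReal.ofReal_toReal (measure_ne_top _ _)]
      _ ≤ ENNReal.ofReal (Real.exp x * c ^ k) := ENNReal.ofReal_le_ofReal h2
  set A : ℕ → Set Ω := fun k => {ω | S k ω ≤ x} with hA
  have geom_sum : ∀ r : ℝ, 0 ≤ r → r < 1 →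
      (∑' k : ℕ, ENNReal.ofReal (Real.exp x * r ^ k)) < ⊤ := by
    intro r hr0 hr1
    have hsumm : Summable (fun k : ℕ => Real.exp x * r ^ k) :=
      (summable_geometric_of_lt_one hr0 hr1).mul_left _
    rw [← ENNReal.ofReal_tsum_of_nonneg (fun k => by positivity) hsumm]
    exact ENNReal.ofReal_lt_top
  have Asum : (∑' k : ℕ, Pr (A k)) < ⊤ :=
    lt_of_le_of_lt (ENNReal.tsum_le_tsum fun k => chern k) (geom_sum c hc0 hc1)
  -- second moment sum
  have Asum2 : (∑' j : ℕ, ∑' k : ℕ, Pr (A j ∩ A k)) < ⊤ := by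
    set r : ℝ := Real.sqrt c with hr
    have hr0 : 0 ≤ r := Real.sqrt_nonneg _
    have hr1 : r < 1 := by
      rw [hr, show (1:ℝ) = Real.sqrt 1 by simp]
      exact Real.sqrt_lt_sqrt hc0 hc1
    have hbd : ∀ j k : ℕ, Pr (A j ∩ A k)
        ≤ ENNReal.ofReal (Real.exp x * r ^ j) * ENNReal.ofReal (r ^ k) := by
      intro j k
      have h1 : Pr (A j ∩ A k) ≤ Pr (A (max j k)) := by
        rcases le_total j k with h | h
        · simpa [max_eq_right h] using measure_mono (Set.inter_subset_right)
        · simpa [max_eq_left h] using measure_mono (Set.inter_subset_left)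
      have h2 : c ^ (max j k) ≤ r ^ j * r ^ k := by
        have hc : c = r ^ 2 := (Real.sq_sqrt hc0).symm
        rw [hc, ← pow_mul, ← pow_add]
        exact pow_le_pow_of_le_one hr0 hr1.le (by omega)
      calc Pr (A j ∩ A k) ≤ ENNReal.ofReal (Real.exp x * c ^ (max j k)) :=
            le_trans h1 (chern _)
        _ ≤ ENNReal.ofReal (Real.exp x * (r ^ j * r ^ k)) := by
            apply ENNReal.ofReal_le_ofReal
            have := Real.exp_pos x
            nlinarith
        _ = ENNReal.ofReal (Real.exp x * r ^ j) * ENNReal.ofReal (r ^ k) := by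
            rw [← ENNReal.ofReal_mul (by positivity)]
            ring_nf
    calc (∑' j : ℕ, ∑' k : ℕ, Pr (A j ∩ A k))
        ≤ ∑' j : ℕ, ∑' k : ℕ, ENNReal.ofReal (Real.exp x * r ^ j) * ENNReal.ofReal (r ^ k) :=
          ENNReal.tsum_le_tsum fun j => ENNReal.tsum_le_tsum fun k => hbd j k
      _ = (∑' j : ℕ, ENNReal.ofReal (Real.exp x * r ^ j)) * (∑' k : ℕ, ENNReal.ofReal (r ^ k)) := by
          rw [← ENNReal.tsum_mul_right]
          congr 1
          funext j
          rw [ENNReal.tsum_mul_left]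
      _ < ⊤ := by
          apply ENNReal.mul_lt_top (geom_sum r hr0 hr1)
          have : (∑' k : ℕ, ENNReal.ofReal (r ^ k)) < ⊤ := by
            have hsumm : Summable (fun k : ℕ => r ^ k) :=
              summable_geometric_of_lt_one hr0 hr1
            rw [← ENNReal.ofReal_tsum_of_nonneg (fun k => by positivity) hsumm]
            exact ENNReal.ofReal_lt_top
          exact this
  have mA : ∀ k, MeasurableSet (A k) := fun k => measurableSet_le (mS k) measurable_const
  set D : ℕ → Ω → ℝ := fun k ω => (if S k ω + η k ω ≤ x then (1:ℝ) else 0)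
    - F (x - S k ω) * (if S k ω ≤ x then (1:ℝ) else 0) with hD
  set htot : Ω → ℝ≥0∞ := fun ω => ∑' k, (A k).indicator (fun _ => (1:ℝ≥0∞)) ω with hh
  have mh : Measurable htot :=
    Measurable.ennreal_tsum fun k => (measurable_one.indicator (mA k))
  have linth : ∫⁻ ω, htot ω ∂Pr = ∑' k, Pr (A k) := by
    have h1 : ∫⁻ ω, (∑' k, (A k).indicator (fun _ => (1:ℝ≥0∞)) ω) ∂Pr
        = ∑' k, ∫⁻ ω, (A k).indicator (fun _ => (1:ℝ≥0∞)) ω ∂Pr :=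
      lintegral_tsum fun k => ((measurable_one.indicator (mA k)).aemeasurable)
    rw [hh, h1]
    congr 1
    funext k
    exact lintegral_indicator_one (mA k)
  have hfin : ∀ᵐ ω ∂Pr, htot ω < ⊤ := by
    apply ae_lt_top mh
    rw [linth]; exact Asum.ne
  have good : ∀ᵐ ω ∂Pr, (∀ k, 0 < ξ k ω) ∧ (∀ k, 0 ≤ η k ω) ∧ htot ω < ⊤ := by
    filter_upwards [ae_all_iff.2 hpos, ae_all_iff.2 hnonneg, hfin] with ω h1 h2 h3
    exact ⟨h1, h2, h3⟩
  -- pointwise analysis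
  have ptwise : ∀ᵐ ω ∂Pr,
      Tendsto (fun n => (∑ k ∈ Finset.range n, D k ω)^2) atTop
        (𝓝 (((N x ω : ℝ) - M x ω)^2))
      ∧ ∀ n, |∑ k ∈ Finset.range n, D k ω| ≤ 2 * (htot ω).toReal := by
    filter_upwards [good] with ω hω
    obtain ⟨hξω, hηω, hfinω⟩ := hω
    set T : Set ℕ := {k | S k ω ≤ x} with hT
    have hTA : ∀ k, (k ∈ T) = (ω ∈ A k) := fun k => rfl
    have hmono : ∀ j k : ℕ, j ≤ k → S j ω ≤ S k ω := by
      intro j k hjk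
      rw [hS j ω, hS k ω]
      exact Finset.sum_le_sum_of_subset_of_nonneg
        (Finset.range_subset_range.2 hjk) (fun i _ _ => (hξω i).le)
    have hTfin : T.Finite := by
      by_contra hinf
      replace hinf : T.Infinite := hinf
      have : htot ω = ⊤ := by
        rw [hh]
        have heq : ∀ k, (A k).indicator (fun _ => (1:ℝ≥0∞)) ω
            = T.indicator (fun _ => (1:ℝ≥0∞)) k := by
          intro k
          by_cases hk : ω ∈ A k
          · rw [Set.indicator_of_mem hk, Set.indicator_of_mem (show k ∈ T from hk)]
          · rw [Set.indicator_of_notMem hk,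
              Set.indicator_of_notMem (show k ∉ T from hk)]
        calc (∑' k, (A k).indicator (fun _ => (1:ℝ≥0∞)) ω)
            = ∑' k, T.indicator (fun _ => (1:ℝ≥0∞)) k := tsum_congr heq
          _ = ∑' _ : T, (1:ℝ≥0∞) := (tsum_subtype T fun _ => (1:ℝ≥0∞)).symm
          _ = ⊤ := by
              haveI := hinf.to_subtype
              exact ENNReal.tsum_const_eq_top_of_ne_zero one_ne_zero
      rw [this] at hfinω
      exact absurd hfinω (lt_irrefl _)
    have hTdc : ∀ j k : ℕ, j ≤ k → k ∈ T → j ∈ T :=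
      fun j k hjk hk => le_trans (hmono j k hjk) hk
    set n : ℕ := T.ncard with hn
    have hTIio : T = Set.Iio n := nat_downclosed_eq_Iio T hTfin hTdc
    have hρn : ρ x ω = n := by rw [hρ x ω]
    have hSsmall : ∀ k, k < n → S k ω ≤ x := by
      intro k hk
      have : k ∈ T := by rw [hTIio]; exact hk
      exact this
    have hSbig : ∀ k, n ≤ k → ¬ (S k ω ≤ x) := by
      intro k hk hc
      have h1 : k ∈ T := hc
      rw [hTIio] at h1
      have h2 : k < n := h1
      omega
    -- value of N
    have hNval : (N x ω : ℝ)
        = ∑ k ∈ Finset.range n, (if S k ω + η k ω ≤ x then (1:ℝ) else 0) := by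
      have hset : {k : ℕ | S k ω + η k ω ≤ x}
          = ↑((Finset.range n).filter (fun k => S k ω + η k ω ≤ x)) := by
        ext k
        simp only [Finset.coe_filter, Finset.mem_range, Set.mem_setOf_eq]
        constructor
        · intro hk
          refine ⟨?_, hk⟩
          have hkT : k ∈ T := le_trans (le_add_of_nonneg_right (hηω k)) hk
          rw [hTIio] at hkT
          exact hkT
        · exact fun h => h.2
      rw [hN x ω, hset, Set.ncard_coe_finset, Finset.card_filter]
      push_cast
      rfl
    have hMval : M x ω = ∑ k ∈ Finset.range n, F (x - S k ω) := by
      rw [hM x ω, hρn]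
    -- partial sums eventually equal N - M
    have hsumD : ∀ m, n ≤ m →
        ∑ k ∈ Finset.range m, D k ω = (N x ω : ℝ) - M x ω := by
      intro m hm
      have h1 : ∑ k ∈ Finset.range m, D k ω = ∑ k ∈ Finset.range n, D k ω := by
        symm
        apply Finset.sum_subset (Finset.range_subset_range.2 hm)
        intro k _ hk
        rw [Finset.mem_range, not_lt] at hk
        have hkS := hSbig k hk
        have : ¬ (S k ω + η k ω ≤ x) := by
          intro hcon
          exact hkS (le_trans (le_add_of_nonneg_right (hηω k)) hcon)
        simp only [hD, if_neg this, if_neg hkS]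
        ring
      rw [h1, hNval, hMval]
      rw [Finset.sum_sub_distrib]
      congr 1
      apply Finset.sum_congr rfl
      intro k hk
      rw [Finset.mem_range] at hk
      rw [if_pos (hSsmall k hk), mul_one]
    constructor
    · apply Tendsto.congr' (f₁ := fun _ => ((N x ω : ℝ) - M x ω)^2)
      · filter_upwards [eventually_ge_atTop n] with m hm
        rw [hsumD m hm]
      · exact tendsto_const_nhds
    · intro m
      have hDb : ∀ k, |D k ω| ≤ 2 * (if S k ω ≤ x then (1:ℝ) else 0) := by
        intro k
        by_cases hk : S k ω ≤ x
        · rw [if_pos hk, mul_one]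
          rw [hD]
          simp only
          rw [if_pos hk, mul_one]
          have h1 : |(if S k ω + η k ω ≤ x then (1:ℝ) else 0)| ≤ 1 := by
            split_ifs <;> simp
          have h2 : |F (x - S k ω)| ≤ 1 := abs_le.2 ⟨by linarith [F0 (x - S k ω)], F1 _⟩
          calc |(if S k ω + η k ω ≤ x then (1:ℝ) else 0) - F (x - S k ω)|
              ≤ |(if S k ω + η k ω ≤ x then (1:ℝ) else 0)| + |F (x - S k ω)| :=
              abs_sub _ _
            _ ≤ 2 := by linarith
        · rw [if_neg hk]
          have : ¬ (S k ω + η k ω ≤ x) := by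
            intro hcon
            exact hk (le_trans (le_add_of_nonneg_right (hηω k)) hcon)
          simp only [hD, if_neg this, if_neg hk]
          simp
      calc |∑ k ∈ Finset.range m, D k ω| ≤ ∑ k ∈ Finset.range m, |D k ω| :=
          Finset.abs_sum_le_sum_abs _ _
        _ ≤ ∑ k ∈ Finset.range m, 2 * (if S k ω ≤ x then (1:ℝ) else 0) :=
          Finset.sum_le_sum fun k _ => hDb k
        _ = 2 * ∑ k ∈ Finset.range m, (if S k ω ≤ x then (1:ℝ) else 0) := by
          rw [Finset.mul_sum]
        _ ≤ 2 * (htot ω).toReal := by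
          have key : ∑ k ∈ Finset.range m, (if S k ω ≤ x then (1:ℝ) else 0)
              ≤ (htot ω).toReal := by
            have h1 : ∑ k ∈ Finset.range m, (if S k ω ≤ x then (1:ℝ) else 0)
                = (∑ k ∈ Finset.range m, (A k).indicator (fun _ => (1:ℝ≥0∞)) ω).toReal := by
              rw [ENNReal.toReal_sum (by
                intro k _
                by_cases hk : ω ∈ A k
                · rw [Set.indicator_of_mem hk]; simp
                · rw [Set.indicator_of_notMem hk]; simp)]
              apply Finset.sum_congr rfl
              intro k _
              by_cases hk : ω ∈ A k
              · rw [Set.indicator_of_mem hk, if_pos (show S k ω ≤ x from hk)]; simp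
              · rw [Set.indicator_of_notMem hk,
                  if_neg (show ¬ S k ω ≤ x from hk)]; simp
            rw [h1]
            apply ENNReal.toReal_mono hfinω.ne
            exact ENNReal.sum_le_tsum (Finset.range m)
          linarith
      
  have mD : ∀ k, Measurable (D k) := by
    intro k
    rw [hD]
    apply Measurable.sub
    · exact Measurable.ite (measurableSet_le ((mS k).add (mη k)) measurable_const)
        measurable_const measurable_const
    · exact ((mF.comp ((measurable_const.sub (mS k))))).mul
        (Measurable.ite (measurableSet_le (mS k) measurable_const)
          measurable_const measurable_const)
  have int_bnd : Integrable (fun ω => (2 * (htot ω).toReal)^2) Pr := by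
    constructor
    · exact ((mh.ennreal_toReal.const_mul 2).pow_const 2).aestronglyMeasurable
    · rw [hasFiniteIntegral_iff_norm]
      have hle : ∀ ω, ENNReal.ofReal ‖(2 * (htot ω).toReal)^2‖ ≤ 4 * (htot ω * htot ω) := by
        intro ω
        by_cases h : htot ω = ⊤
        · rw [h]; simp
        · rw [Real.norm_eq_abs, abs_of_nonneg (by positivity)]
          have : (2 * (htot ω).toReal)^2 = 4 * ((htot ω).toReal * (htot ω).toReal) := by ring
          rw [this, ENNReal.ofReal_mul (by norm_num), ENNReal.ofReal_mul ENNReal.toReal_nonneg,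
            ENNReal.ofReal_toReal h]
          have h4 : ENNReal.ofReal (4:ℝ) = (4:ℝ≥0∞) := by
            rw [ENNReal.ofReal_ofNat]
          rw [h4]
      calc ∫⁻ ω, ENNReal.ofReal ‖(2 * (htot ω).toReal)^2‖ ∂Pr
          ≤ ∫⁻ ω, 4 * (htot ω * htot ω) ∂Pr := lintegral_mono hle
        _ = 4 * ∫⁻ ω, htot ω * htot ω ∂Pr := lintegral_const_mul 4 (mh.mul mh)
        _ < ⊤ := by
            have hsq : ∀ ω, htot ω * htot ω
                = ∑' j : ℕ, ∑' k : ℕ, (A j ∩ A k).indicator (fun _ => (1:ℝ≥0∞)) ω := by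
              intro ω
              rw [hh]
              simp only
              rw [← ENNReal.tsum_mul_right]
              congr 1
              funext j
              rw [← ENNReal.tsum_mul_left]
              congr 1
              funext k
              exact (congrFun (Set.inter_indicator_one (s := A j) (t := A k)
                (M₀ := ℝ≥0∞)) ω).symm
            have hlin : ∫⁻ ω, htot ω * htot ω ∂Pr = ∑' j : ℕ, ∑' k : ℕ, Pr (A j ∩ A k) := by
              calc ∫⁻ ω, htot ω * htot ω ∂Pr
                  = ∫⁻ ω, ∑' j : ℕ, ∑' k : ℕ,
                    (A j ∩ A k).indicator (fun _ => (1:ℝ≥0∞)) ω ∂Pr := by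
                    exact lintegral_congr hsq
                _ = ∑' j : ℕ, ∫⁻ ω, ∑' k : ℕ,
                    (A j ∩ A k).indicator (fun _ => (1:ℝ≥0∞)) ω ∂Pr :=
                    lintegral_tsum fun j => (Measurable.ennreal_tsum fun k =>
                      measurable_one.indicator ((mA j).inter (mA k))).aemeasurable
                _ = ∑' j : ℕ, ∑' k : ℕ, Pr (A j ∩ A k) := by
                    refine tsum_congr fun j => ?_
                    calc ∫⁻ ω, ∑' k : ℕ,
                          (A j ∩ A k).indicator (fun _ => (1:ℝ≥0∞)) ω ∂Pr
                        = ∑' k : ℕ, ∫⁻ ω,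
                          (A j ∩ A k).indicator (fun _ => (1:ℝ≥0∞)) ω ∂Pr :=
                          lintegral_tsum fun k =>
                            (measurable_one.indicator ((mA j).inter (mA k))).aemeasurable
                      _ = ∑' k : ℕ, Pr (A j ∩ A k) := tsum_congr fun k =>
                          lintegral_indicator_one ((mA j).inter (mA k))
            rw [hlin]
            exact ENNReal.mul_lt_top (by norm_num) Asum2
  have LHS_tendsto : Tendsto (fun m => ∫ ω, (∑ k ∈ Finset.range m, D k ω)^2 ∂Pr) atTop
      (𝓝 (∫ ω, ((N x ω : ℝ) - M x ω)^2 ∂Pr)) := by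
    apply tendsto_integral_of_dominated_convergence (fun ω => (2 * (htot ω).toReal)^2)
    · intro n
      exact ((Finset.measurable_sum (Finset.range n) fun k _ => mD k).pow_const
        2).aestronglyMeasurable
    · exact int_bnd
    · intro n
      filter_upwards [ptwise] with ω hω
      have h1 := hω.2 n
      rw [Real.norm_eq_abs, abs_pow]
      calc |∑ k ∈ Finset.range n, D k ω|^2 ≤ (2 * (htot ω).toReal)^2 := by
            apply pow_le_pow_left₀ (abs_nonneg _) h1
        _ = (2 * (htot ω).toReal)^2 := rfl
    · filter_upwards [ptwise] with ω hω
      exact hω.1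
  set ν : Measure ℝ := Measure.map (η 0) Pr with hνdef
  have hFν : ∀ t, F t = (ν (Set.Iic t)).toReal := by
    intro t
    rw [hF t, hνdef, Measure.map_apply (mη 0) measurableSet_Iic]
    rfl
  haveI : IsProbabilityMeasure ν := Measure.isProbabilityMeasure_map (mη 0).aemeasurable
  set g : ℝ → ℝ := fun y => F (x - y) * (1 - F (x - y)) with hg
  have mg : Measurable g := by
    apply Measurable.mul
    · exact mF.comp (measurable_const.sub measurable_id)
    · exact (measurable_const.sub (mF.comp (measurable_const.sub measurable_id)))
  -- ∫ of the shifted indicator under ν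
  have intIic : ∀ s : ℝ, ∫ b, (if s + b ≤ x then (1:ℝ) else 0) ∂ν = F (x - s) := by
    intro s
    have heq : (fun b => if s + b ≤ x then (1:ℝ) else 0)
        = (Set.Iic (x - s)).indicator (fun _ => (1:ℝ)) := by
      funext b
      by_cases hb : s + b ≤ x
      · rw [if_pos hb, Set.indicator_of_mem (by simp [Set.mem_Iic]; linarith)]
      · rw [if_neg hb, Set.indicator_of_notMem (by simp [Set.mem_Iic]; linarith)]
    rw [heq, integral_indicator_const _ measurableSet_Iic, hFν (x - s)]
    simp [Measure.real]
  have int_ind : ∀ s : ℝ, Integrable (fun b => if s + b ≤ x then (1:ℝ) else 0) ν := by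
    intro s
    refine Integrable.mono' (integrable_const (1:ℝ)) ?_ ?_
    · apply Measurable.aestronglyMeasurable
      exact Measurable.ite (measurableSet_le (measurable_const.add measurable_id)
        measurable_const) measurable_const measurable_const
    · refine ae_of_all _ fun b => ?_
      rw [Real.norm_eq_abs]
      split_ifs <;> simp
  -- master Fubini lemma
  have master : ∀ k : ℕ, ∀ G : (Fin k → ℝ × ℝ) × ℝ → ℝ, Measurable G → (∀ p, |G p| ≤ 4) →
      ∫ ω, G (fun i : Fin k => (ξ i ω, η i ω), η k ω) ∂Pr
        = ∫ v, ∫ b, G (v, b) ∂ν ∂(Measure.map (fun ω (i : Fin k) => (ξ i ω, η i ω)) Pr) := by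
    intro k G mG hG4
    set V : Ω → (Fin k → ℝ × ℝ) := fun ω i => (ξ i ω, η i ω) with hV
    have mV : Measurable V := measurable_pi_lambda _ fun i => hmeas i
    have hVW : IndepFun V (η k) Pr := by
      have hgrp := hindep.indepFun_finset (Finset.range k) {k}
        (by simp [Finset.disjoint_left]; omega) hmeas
      have hφ : Measurable (fun v : ({i // i ∈ Finset.range k} → ℝ × ℝ) =>
          (fun i : Fin k => v ⟨(i:ℕ), Finset.mem_range.mpr i.isLt⟩)) :=
        measurable_pi_lambda _ fun i => measurable_pi_apply _
      have hψ : Measurable (fun v : ({i // i ∈ ({k}:Finset ℕ)} → ℝ × ℝ) =>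
          (v ⟨k, Finset.mem_singleton_self k⟩).2) := (measurable_pi_apply _).snd
      exact hgrp.comp hφ hψ
    haveI : IsProbabilityMeasure (Measure.map V Pr) :=
      Measure.isProbabilityMeasure_map mV.aemeasurable
    have hjoint : Measure.map (fun ω => (V ω, η k ω)) Pr
        = (Measure.map V Pr).prod (Measure.map (η k) Pr) :=
      (indepFun_iff_map_prod_eq_prod_map_map mV.aemeasurable (mη k).aemeasurable).mp hVW
    have h1 : ∫ ω, G (V ω, η k ω) ∂Pr
        = ∫ p, G p ∂(Measure.map (fun ω => (V ω, η k ω)) Pr) :=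
      (integral_map (mV.prodMk (mη k)).aemeasurable mG.aestronglyMeasurable).symm
    have hint : Integrable G ((Measure.map V Pr).prod ν) := by
      refine Integrable.mono' (integrable_const (4:ℝ)) mG.aestronglyMeasurable ?_
      exact ae_of_all _ fun p => by rw [Real.norm_eq_abs]; exact hG4 p
    calc ∫ ω, G (V ω, η k ω) ∂Pr
        = ∫ p, G p ∂(Measure.map (fun ω => (V ω, η k ω)) Pr) := h1
      _ = ∫ p, G p ∂((Measure.map V Pr).prod ν) := by rw [hjoint, hν k]
      _ = ∫ v, ∫ b, G (v, b) ∂ν ∂(Measure.map V Pr) := integral_prod G hint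
  -- partial sums inside the product space
  have msf : ∀ k m : ℕ, Measurable (fun v : Fin k → ℝ × ℝ =>
      ∑ i ∈ Finset.range m, (if h : i < k then (v ⟨i, h⟩).1 else 0)) := by
    intro k m
    apply Finset.measurable_sum
    intro i _
    by_cases h : i < k
    · simp only [dif_pos h]
      exact (measurable_pi_apply (⟨i, h⟩ : Fin k)).fst
    · simp only [dif_neg h]
      exact measurable_const
  have hsV : ∀ k m : ℕ, m ≤ k → ∀ ω : Ω,
      (∑ i ∈ Finset.range m, (if h : i < k then
        (((fun i : Fin k => (ξ i ω, η i ω)) ⟨i, h⟩).1) else 0)) = S m ω := by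
    intro k m hmk ω
    rw [hS m ω]
    apply Finset.sum_congr rfl
    intro i hi
    have hik : i < k := lt_of_lt_of_le (Finset.mem_range.mp hi) hmk
    rw [dif_pos hik]
  -- bounds
  have ite01 : ∀ (P : Prop) [Decidable P], (0:ℝ) ≤ (if P then (1:ℝ) else 0)
      ∧ (if P then (1:ℝ) else 0) ≤ 1 := by
    intro P _; constructor <;> split_ifs <;> norm_num
  -- the key off-diagonal computation
  have key1 : ∀ j k : ℕ, j < k → ∫ ω, D j ω * D k ω ∂Pr = 0 := by
    intro j k hjk
    set sf : ℕ → (Fin k → ℝ × ℝ) → ℝ := fun m v =>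
      ∑ i ∈ Finset.range m, (if h : i < k then (v ⟨i, h⟩).1 else 0) with hsf
    set ee : (Fin k → ℝ × ℝ) × ℝ → ℝ := fun p =>
      (if sf k p.1 + p.2 ≤ x then (1:ℝ) else 0)
        - F (x - sf k p.1) * (if sf k p.1 ≤ x then (1:ℝ) else 0) with hee
    set dj : (Fin k → ℝ × ℝ) → ℝ := fun v =>
      (if sf j v + (v ⟨j, hjk⟩).2 ≤ x then (1:ℝ) else 0)
        - F (x - sf j v) * (if sf j v ≤ x then (1:ℝ) else 0) with hdj
    have mee : Measurable ee := by
      apply Measurable.sub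
      · exact Measurable.ite (measurableSet_le (((msf k k).comp measurable_fst).add
          measurable_snd) measurable_const) measurable_const measurable_const
      · exact (mF.comp (measurable_const.sub ((msf k k).comp measurable_fst))).mul
          (Measurable.ite (measurableSet_le ((msf k k).comp measurable_fst)
            measurable_const) measurable_const measurable_const)
    have mdj : Measurable dj := by
      apply Measurable.sub
      · exact Measurable.ite (measurableSet_le ((msf k j).add
          ((measurable_pi_apply _).snd)) measurable_const) measurable_const measurable_const
      · exact (mF.comp (measurable_const.sub (msf k j))).mul
          (Measurable.ite (measurableSet_le (msf k j) measurable_const)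
            measurable_const measurable_const)
    have bee : ∀ p, |ee p| ≤ 2 := by
      intro p
      simp only [hee]
      obtain ⟨h1, h2⟩ := ite01 (sf k p.1 + p.2 ≤ x)
      obtain ⟨h3, h4⟩ := ite01 (sf k p.1 ≤ x)
      have h5 := F0 (x - sf k p.1); have h6 := F1 (x - sf k p.1)
      rw [abs_le]
      constructor <;> nlinarith
    have bdj : ∀ v, |dj v| ≤ 2 := by
      intro v
      simp only [hdj]
      obtain ⟨h1, h2⟩ := ite01 (sf j v + (v ⟨j, hjk⟩).2 ≤ x)
      obtain ⟨h3, h4⟩ := ite01 (sf j v ≤ x)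
      have h5 := F0 (x - sf j v); have h6 := F1 (x - sf j v)
      rw [abs_le]
      constructor <;> nlinarith
    have hGb : ∀ p, |dj p.1 * ee p| ≤ 4 := by
      intro p
      rw [abs_mul]
      calc |dj p.1| * |ee p| ≤ 2 * 2 :=
        mul_le_mul (bdj p.1) (bee p) (abs_nonneg _) (by norm_num)
      _ = 4 := by norm_num
    have hGid : ∀ ω, dj (fun i : Fin k => (ξ i ω, η i ω))
        * ee (fun i : Fin k => (ξ i ω, η i ω), η k ω) = D j ω * D k ω := by
      intro ω
      simp only [hdj, hee, hD]
      rw [show sf j (fun i : Fin k => (ξ i ω, η i ω)) = S j ω from hsV k j hjk.le ω,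
        show sf k (fun i : Fin k => (ξ i ω, η i ω)) = S k ω from hsV k k le_rfl ω]
    have hm := master k (fun p => dj p.1 * ee p)
      ((mdj.comp measurable_fst).mul mee) hGb
    have e1 : (fun ω => D j ω * D k ω)
        = fun ω => dj (fun i : Fin k => (ξ i ω, η i ω))
          * ee (fun i : Fin k => (ξ i ω, η i ω), η k ω) := by
      funext ω; rw [hGid ω]
    rw [e1]
    rw [hm]
    have inner0 : ∀ v : Fin k → ℝ × ℝ, ∫ b, ee (v, b) ∂ν = 0 := by
      intro v
      have he2 : (fun b => ee (v, b)) = fun b => (if sf k v + b ≤ x then (1:ℝ) else 0)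
          - F (x - sf k v) * (if sf k v ≤ x then (1:ℝ) else 0) := rfl
      rw [he2, integral_sub (int_ind (sf k v)) (integrable_const _), intIic (sf k v),
        integral_const]
      simp only [measure_univ, probReal_univ, ENNReal.toReal_one, one_smul]
      by_cases hs : sf k v ≤ x
      · rw [if_pos hs, mul_one, sub_self]
      · rw [if_neg hs, mul_zero, Fneg (x - sf k v) (by linarith), sub_zero]
    have : ∀ v : Fin k → ℝ × ℝ, ∫ b, dj v * ee (v, b) ∂ν = 0 := by
      intro v
      rw [integral_const_mul, inner0 v, mul_zero]
    calc ∫ v, ∫ b, dj v * ee (v, b) ∂ν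
          ∂(Measure.map (fun ω (i : Fin k) => (ξ i ω, η i ω)) Pr)
        = ∫ v, (0:ℝ) ∂(Measure.map (fun ω (i : Fin k) => (ξ i ω, η i ω)) Pr) := by
          apply integral_congr_ae
          exact ae_of_all _ fun v => this v
      _ = 0 := integral_zero _ _
  -- the key diagonal computation
  have key2 : ∀ k : ℕ, ∫ ω, (D k ω)^2 ∂Pr
      = ∫ y in Set.Icc (0:ℝ) x, g y ∂(Measure.map (S k) Pr) := by
    intro k
    set sf : ℕ → (Fin k → ℝ × ℝ) → ℝ := fun m v =>
      ∑ i ∈ Finset.range m, (if h : i < k then (v ⟨i, h⟩).1 else 0) with hsf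
    set ee : (Fin k → ℝ × ℝ) × ℝ → ℝ := fun p =>
      (if sf k p.1 + p.2 ≤ x then (1:ℝ) else 0)
        - F (x - sf k p.1) * (if sf k p.1 ≤ x then (1:ℝ) else 0) with hee
    have mee : Measurable ee := by
      apply Measurable.sub
      · exact Measurable.ite (measurableSet_le (((msf k k).comp measurable_fst).add
          measurable_snd) measurable_const) measurable_const measurable_const
      · exact (mF.comp (measurable_const.sub ((msf k k).comp measurable_fst))).mul
          (Measurable.ite (measurableSet_le ((msf k k).comp measurable_fst)
            measurable_const) measurable_const measurable_const)
    have bee : ∀ p, |ee p| ≤ 2 := by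
      intro p
      simp only [hee]
      obtain ⟨h1, h2⟩ := ite01 (sf k p.1 + p.2 ≤ x)
      obtain ⟨h3, h4⟩ := ite01 (sf k p.1 ≤ x)
      have h5 := F0 (x - sf k p.1); have h6 := F1 (x - sf k p.1)
      rw [abs_le]
      constructor <;> nlinarith
    have hGb : ∀ p, |(ee p)^2| ≤ 4 := by
      intro p
      calc |(ee p)^2| = |ee p|^2 := abs_pow _ _
        _ ≤ 2^2 := pow_le_pow_left₀ (abs_nonneg _) (bee p) 2
        _ = 4 := by norm_num
    have hGid : ∀ ω, (ee (fun i : Fin k => (ξ i ω, η i ω), η k ω))^2 = (D k ω)^2 := by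
      intro ω
      simp only [hee, hD]
      rw [show sf k (fun i : Fin k => (ξ i ω, η i ω)) = S k ω from hsV k k le_rfl ω]
    have hm := master k (fun p => (ee p)^2) (mee.pow_const 2) hGb
    have e1 : (fun ω => (D k ω)^2)
        = fun ω => (ee (fun i : Fin k => (ξ i ω, η i ω), η k ω))^2 := by
      funext ω; rw [hGid ω]
    rw [e1, hm]
    -- inner integral
    have inner2 : ∀ v : Fin k → ℝ × ℝ, ∫ b, (ee (v, b))^2 ∂ν
        = (if sf k v ≤ x then g (sf k v) else 0) := by
      intro v
      set s : ℝ := sf k v with hs'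
      set u : ℝ := F (x - s) * (if s ≤ x then (1:ℝ) else 0) with hu
      have hexp : (fun b => (ee (v, b))^2)
          = fun b => (if s + b ≤ x then (1:ℝ) else 0) * (1 - 2*u) + u^2 := by
        funext b
        simp only [hee, hu]
        split_ifs <;> ring
      rw [hexp]
      rw [integral_add ((int_ind s).mul_const _) (integrable_const _),
        integral_mul_const, intIic s, integral_const]
      simp only [measure_univ, probReal_univ, ENNReal.toReal_one, one_smul]
      by_cases hsx : s ≤ x
      · rw [if_pos hsx, hg]
        simp only
        rw [hu, if_pos hsx, mul_one]
        ring
      · rw [if_neg hsx, hu, if_neg hsx, mul_zero, Fneg (x - s) (by linarith)]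
        ring
    have e2 : ∫ v, ∫ b, (ee (v, b))^2 ∂ν
          ∂(Measure.map (fun ω (i : Fin k) => (ξ i ω, η i ω)) Pr)
        = ∫ v, (if sf k v ≤ x then g (sf k v) else 0)
          ∂(Measure.map (fun ω (i : Fin k) => (ξ i ω, η i ω)) Pr) :=
      integral_congr_ae (ae_of_all _ fun v => inner2 v)
    rw [e2]
    -- push forward along sf k
    have mφ : Measurable (fun y : ℝ => if y ≤ x then g y else 0) := by
      exact Measurable.ite (measurableSet_le measurable_id measurable_const)
        mg measurable_const
    have hmap : Measure.map (sf k)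
        (Measure.map (fun ω (i : Fin k) => (ξ i ω, η i ω)) Pr)
        = Measure.map (S k) Pr := by
      rw [Measure.map_map (msf k k) (measurable_pi_lambda _ fun i => hmeas i)]
      congr 1
      funext ω
      exact hsV k k le_rfl ω
    have e3 : ∫ v, (if sf k v ≤ x then g (sf k v) else 0)
          ∂(Measure.map (fun ω (i : Fin k) => (ξ i ω, η i ω)) Pr)
        = ∫ y, (if y ≤ x then g y else 0) ∂(Measure.map (S k) Pr) := by
      rw [← hmap]
      exact (integral_map (msf k k).aemeasurable mφ.aestronglyMeasurable).symm
    rw [e3]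
    -- convert to set integral over Icc 0 x
    have e4 : (fun y : ℝ => if y ≤ x then g y else 0) = (Set.Iic x).indicator g := by
      funext y
      rw [Set.indicator_apply]
      rfl
    rw [e4, integral_indicator measurableSet_Iic]
    apply setIntegral_congr_set
    -- Iic x =ᵐ[map (S k) Pr] Icc 0 x
    have hae : ∀ᵐ y ∂(Measure.map (S k) Pr), y ∈ {t : ℝ | 0 ≤ t} :=
      (ae_map_iff (mS k).aemeasurable
        (measurableSet_le measurable_const measurable_id)).mpr (Snonneg k)
    rw [Filter.eventuallyEq_set]
    filter_upwards [hae] with y hy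
    simp [Set.mem_Iic, Set.mem_Icc, hy]
  -- global bound on D
  have bD : ∀ k ω, |D k ω| ≤ 2 := by
    intro k ω
    simp only [hD]
    obtain ⟨h1, h2⟩ := ite01 (S k ω + η k ω ≤ x)
    obtain ⟨h3, h4⟩ := ite01 (S k ω ≤ x)
    have h5 := F0 (x - S k ω); have h6 := F1 (x - S k ω)
    rw [abs_le]
    constructor <;> nlinarith
  have intDD : ∀ j k : ℕ, Integrable (fun ω => D j ω * D k ω) Pr := by
    intro j k
    refine Integrable.mono' (integrable_const (4:ℝ))
      ((mD j).mul (mD k)).aestronglyMeasurable (ae_of_all _ fun ω => ?_)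
    rw [Real.norm_eq_abs, abs_mul]
    calc |D j ω| * |D k ω| ≤ 2 * 2 :=
        mul_le_mul (bD j ω) (bD k ω) (abs_nonneg _) (by norm_num)
      _ = 4 := by norm_num
  have expand : ∀ n : ℕ, ∫ ω, (∑ k ∈ Finset.range n, D k ω)^2 ∂Pr
      = ∑ j ∈ Finset.range n, ∫ y in Set.Icc (0:ℝ) x, g y ∂(Measure.map (S j) Pr) := by
    intro n
    have h1 : (fun ω => (∑ k ∈ Finset.range n, D k ω)^2)
        = fun ω => ∑ j ∈ Finset.range n, ∑ k ∈ Finset.range n, D j ω * D k ω := by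
      funext ω
      rw [sq, Finset.sum_mul_sum]
    rw [h1]
    rw [integral_finset_sum _ (fun j _ => integrable_finset_sum _ (fun k _ => intDD j k))]
    refine Finset.sum_congr rfl fun j hj => ?_
    rw [integral_finset_sum _ (fun k _ => intDD j k)]
    rw [Finset.sum_eq_single_of_mem j hj]
    · rw [← key2 j]
      congr 1
      funext ω
      rw [sq]
    · intro k _ hkj
      rcases lt_or_gt_of_ne hkj with h | h
      · have := key1 k j h
        calc ∫ ω, D j ω * D k ω ∂Pr = ∫ ω, D k ω * D j ω ∂Pr := by
              congr 1; funext ω; ring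
          _ = 0 := this
      · exact key1 j k h
  -- RHS
  have hres : (Measure.sum fun k : ℕ => Measure.map (S k) Pr).restrict (Set.Icc 0 x)
      = Measure.sum (fun k : ℕ => (Measure.map (S k) Pr).restrict (Set.Icc 0 x)) :=
    Measure.restrict_sum _ measurableSet_Icc
  have hfinres : (Measure.sum (fun k : ℕ =>
      (Measure.map (S k) Pr).restrict (Set.Icc 0 x))) Set.univ < ⊤ := by
    rw [Measure.sum_apply _ MeasurableSet.univ]
    have hle : ∀ k : ℕ, (Measure.map (S k) Pr).restrict (Set.Icc 0 x) Set.univ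
        ≤ Pr {ω | S k ω ≤ x} := by
      intro k
      rw [Measure.restrict_apply MeasurableSet.univ, Set.univ_inter]
      calc (Measure.map (S k) Pr) (Set.Icc 0 x) ≤ (Measure.map (S k) Pr) (Set.Iic x) :=
            measure_mono Set.Icc_subset_Iic_self
        _ = Pr (S k ⁻¹' Set.Iic x) := Measure.map_apply (mS k) measurableSet_Iic
        _ = Pr {ω | S k ω ≤ x} := rfl
    exact lt_of_le_of_lt (ENNReal.tsum_le_tsum hle) Asum
  have hgbound : ∀ y, ‖g y‖ ≤ 1 := by
    intro y
    simp only [hg]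
    rw [Real.norm_eq_abs]
    have h1 := F0 (x - y); have h2 := F1 (x - y)
    rw [abs_le]
    constructor <;> nlinarith
  have hint : Integrable g ((Measure.sum fun k : ℕ => Measure.map (S k) Pr).restrict
      (Set.Icc 0 x)) := by
    constructor
    · exact mg.aestronglyMeasurable
    · rw [hasFiniteIntegral_iff_norm]
      calc ∫⁻ y, ENNReal.ofReal ‖g y‖
            ∂((Measure.sum fun k : ℕ => Measure.map (S k) Pr).restrict (Set.Icc 0 x))
          ≤ ∫⁻ _, 1 ∂((Measure.sum fun k : ℕ => Measure.map (S k) Pr).restrict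
            (Set.Icc 0 x)) := by
            apply lintegral_mono
            intro y
            calc ENNReal.ofReal ‖g y‖ ≤ ENNReal.ofReal 1 :=
                ENNReal.ofReal_le_ofReal (hgbound y)
              _ = 1 := ENNReal.ofReal_one
        _ = ((Measure.sum fun k : ℕ => Measure.map (S k) Pr).restrict (Set.Icc 0 x))
            Set.univ := lintegral_one
        _ < ⊤ := by rw [hres]; exact hfinres
  have hint2 : Integrable g (Measure.sum (fun k : ℕ =>
      (Measure.map (S k) Pr).restrict (Set.Icc 0 x))) := by rwa [hres] at hint
  have hhs := hasSum_integral_measure hint2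
  have RHS_tendsto : Tendsto (fun n => ∑ j ∈ Finset.range n,
      ∫ y in Set.Icc (0:ℝ) x, g y ∂(Measure.map (S j) Pr)) atTop
      (𝓝 (∫ y in Set.Icc (0:ℝ) x, g y
        ∂(Measure.sum fun k : ℕ => Measure.map (S k) Pr))) := by
    have := hhs.tendsto_sum_nat
    rw [show (∫ y, g y ∂(Measure.sum (fun k : ℕ =>
        (Measure.map (S k) Pr).restrict (Set.Icc 0 x))))
      = ∫ y in Set.Icc (0:ℝ) x, g y
        ∂(Measure.sum fun k : ℕ => Measure.map (S k) Pr) from by rw [hres]] at this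
    exact this
  have LHS2 : Tendsto (fun m => ∫ ω, (∑ k ∈ Finset.range m, D k ω)^2 ∂Pr) atTop
      (𝓝 (∫ y in Set.Icc (0:ℝ) x, g y
        ∂(Measure.sum fun k : ℕ => Measure.map (S k) Pr))) := by
    have : (fun m => ∫ ω, (∑ k ∈ Finset.range m, D k ω)^2 ∂Pr)
        = fun n => ∑ j ∈ Finset.range n,
          ∫ y in Set.Icc (0:ℝ) x, g y ∂(Measure.map (S j) Pr) := funext expand
    rw [this]
    exact RHS_tendsto
  have := tendsto_nhds_unique LHS_tendsto LHS2
  rw [this, hg]
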